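/- Let f(t) − r(t) denote the gap between front and rear cars in the same-direction kinematic model, with initial gap d₀ strictly greater than d_min = [v_r·ρ + a_acc·ρ²/2 + (v_r+ρ·a_acc)²/(2·a_min) − v_f²/(2·a_max)]₊. Then f(t) − r(t) > 0 for all t ≥ 0 (no collision ever occurs). -/

import Mathlib

open intervalIntegral MeasureTheory

private lemma ramp_cont (c a : ℝ) : Continuous fun s : ℝ => max 0 (c - a * s) :=
  continuous_const.max (continuous_const.sub (continuous_const.mul continuous_id))

private lemma linear_integral (b m t : ℝ) :
    ∫ s in (0:ℝ)..t, (b + m * s) = b * t + m * t ^ 2 / 2 := by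
  have h1 : IntervalIntegrable (fun s : ℝ => m * s) volume 0 t :=
    (continuous_const.mul continuous_id').intervalIntegrable _ _
  rw [intervalIntegral.integral_add intervalIntegrable_const h1,
    intervalIntegral.integral_const_mul, integral_id, intervalIntegral.integral_const]
  simp
  ring

private lemma ramp_aux (c a t : ℝ) (ha : 0 < a) (ht : 0 ≤ t) (h : a * t ≤ c) :
    ∫ s in (0:ℝ)..t, max 0 (c - a * s) = c * t - a * t ^ 2 / 2 := by
  have heq : Set.EqOn (fun s : ℝ => max 0 (c - a * s)) (fun s => c + (-a) * s)
      (Set.uIcc 0 t) := by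
    intro s hs
    rw [Set.uIcc_of_le ht] at hs
    have h2 : a * s ≤ a * t := mul_le_mul_of_nonneg_left hs.2 ha.le
    simp only
    rw [max_eq_right (by linarith)]
    ring
  rw [intervalIntegral.integral_congr heq, linear_integral]
  ring

private lemma ramp_integral (c a t : ℝ) (ha : 0 < a) (hc : 0 ≤ c) (ht : 0 ≤ t) :
    ∫ s in (0:ℝ)..t, max 0 (c - a * s)
      = c ^ 2 / (2 * a) - (max 0 (c - a * t)) ^ 2 / (2 * a) := by
  rcases le_or_gt t (c / a) with h | h
  · have hat : a * t ≤ c := by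
      rw [le_div_iff₀ ha] at h; linarith
    rw [ramp_aux c a t ha ht hat, max_eq_right (by linarith)]
    field_simp
    ring
  · have hca : 0 ≤ c / a := div_nonneg hc ha.le
    have hac : a * (c / a) ≤ c := by field_simp; rfl
    rw [← intervalIntegral.integral_add_adjacent_intervals
      ((ramp_cont c a).intervalIntegrable 0 (c/a)) ((ramp_cont c a).intervalIntegrable (c/a) t)]
    have h2 : ∫ s in (c/a)..t, max 0 (c - a * s) = 0 := by
      have heq : Set.EqOn (fun s : ℝ => max 0 (c - a * s)) (fun _ => 0) (Set.uIcc (c/a) t) := by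
        intro s hs
        rw [Set.uIcc_of_le h.le] at hs
        have : c / a ≤ s := hs.1
        have h3 : c ≤ a * s := by rw [div_le_iff₀ ha] at this; linarith
        simp only
        exact max_eq_left (by linarith)
      rw [intervalIntegral.integral_congr heq, intervalIntegral.integral_const]
      simp
    have h3 : c ≤ a * t := by rw [div_lt_iff₀ ha] at h; linarith
    rw [h2, ramp_aux c a (c/a) ha hca hac, max_eq_left (by linarith)]
    field_simp
    ring

private lemma persist (v_r v_f ρ a_acc a_min a_max s t : ℝ)
    (hvr : 0 ≤ v_r) (hacc : 0 ≤ a_acc) (hmin : 0 < a_min) (hlt : a_min < a_max)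
    (hs : 0 ≤ s) (hst : s ≤ t)
    (h : max 0 (v_f - a_max * s) ≤
      (if s ≤ ρ then v_r + a_acc * s else max 0 (v_r + ρ * a_acc - a_min * (s - ρ)))) :
    max 0 (v_f - a_max * t) ≤
      (if t ≤ ρ then v_r + a_acc * t else max 0 (v_r + ρ * a_acc - a_min * (t - ρ))) := by
  have hamax : (0:ℝ) < a_max := hmin.trans hlt
  have ht : 0 ≤ t := hs.trans hst
  by_cases hsρ : s ≤ ρ
  · rw [if_pos hsρ] at h
    have h' : v_f - a_max * s ≤ v_r + a_acc * s := le_trans (le_max_right _ _) h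
    by_cases htρ : t ≤ ρ
    · rw [if_pos htρ]
      apply max_le
      · have : 0 ≤ a_acc * t := mul_nonneg hacc ht
        linarith
      · nlinarith [mul_le_mul_of_nonneg_left hst hamax.le, mul_le_mul_of_nonneg_left hst hacc]
    · rw [if_neg htρ]
      push_neg at htρ
      apply max_le (le_max_left _ _)
      refine le_trans ?_ (le_max_right _ _)
      nlinarith [mul_nonneg (sub_nonneg.2 hlt.le) (sub_nonneg.2 hst),
        mul_nonneg hacc (sub_nonneg.2 hsρ), mul_nonneg hmin.le (sub_nonneg.2 hsρ)]
  · push_neg at hsρ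
    have htρ : ¬ t ≤ ρ := by push_neg; linarith
    rw [if_neg (not_le.mpr hsρ)] at h
    rw [if_neg htρ]
    rcases le_or_gt (v_f - a_max * s) 0 with hv | hv
    · apply max_le (le_max_left _ _)
      refine le_trans ?_ (le_max_left _ _)
      nlinarith [mul_le_mul_of_nonneg_left hst hamax.le]
    · have hX : v_f - a_max * s ≤ v_r + ρ * a_acc - a_min * (s - ρ) := by
        rcases max_cases (0:ℝ) (v_r + ρ * a_acc - a_min * (s - ρ)) with ⟨he, _⟩ | ⟨he, _⟩
        · rw [he] at h
          exact absurd (le_trans (le_max_right _ _) h) (not_le.mpr hv)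
        · rw [he] at h
          exact le_trans (le_max_right _ _) h
      apply max_le (le_max_left _ _)
      refine le_trans ?_ (le_max_right _ _)
      nlinarith [mul_nonneg (sub_nonneg.2 hlt.le) (sub_nonneg.2 hst)]



/-- If the initial gap exceeds the minimal safe longitudinal distance, the gap between the
front and rear cars remains strictly positive at all times: no collision ever occurs. -/
theorem no_collision_of_safe_distance (v_r v_f ρ a_acc a_min a_max d₀ : ℝ)
    (hvr : 0 ≤ v_r) (hvf : 0 ≤ v_f) (hρ : 0 < ρ)
    (hacc : 0 ≤ a_acc) (hmin : 0 < a_min) (hlt : a_min < a_max)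
    (vR : ℝ → ℝ) (vF : ℝ → ℝ) (r f : ℝ → ℝ)
    (hvR : vR = fun t => if t ≤ ρ then v_r + a_acc * t
        else max 0 (v_r + ρ * a_acc - a_min * (t - ρ)))
    (hvF : vF = fun t => max 0 (v_f - a_max * t))
    (hr : r = fun t => ∫ s in (0:ℝ)..t, vR s)
    (hf : f = fun t => d₀ + ∫ s in (0:ℝ)..t, vF s)
    (hd : d₀ > max (v_r * ρ + a_acc * ρ ^ 2 / 2 +
        (v_r + ρ * a_acc) ^ 2 / (2 * a_min) - v_f ^ 2 / (2 * a_max)) 0) :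
    ∀ t, 0 ≤ t → f t - r t > 0 := by
  subst hvR hvF hr hf
  have hamax : (0:ℝ) < a_max := hmin.trans hlt
  have hvρ : 0 ≤ v_r + ρ * a_acc := add_nonneg hvr (mul_nonneg hρ.le hacc)
  have hcR : Continuous (fun s : ℝ => if s ≤ ρ then v_r + a_acc * s
      else max 0 (v_r + ρ * a_acc - a_min * (s - ρ))) := by
    apply Continuous.if_le
    · exact continuous_const.add (continuous_const.mul continuous_id)
    · exact continuous_const.max
        (continuous_const.sub (continuous_const.mul (continuous_id.sub continuous_const)))
    · exact continuous_id
    · exact continuous_const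
    · intro x hx
      rw [hx, sub_self, mul_zero, sub_zero, max_eq_right hvρ]
      ring
  intro t ht
  simp only
  by_cases hc : ∀ s ∈ Set.Icc (0:ℝ) t,
      (if s ≤ ρ then v_r + a_acc * s else max 0 (v_r + ρ * a_acc - a_min * (s - ρ)))
        ≤ max 0 (v_f - a_max * s)
  · have hmono := intervalIntegral.integral_mono_on (μ := MeasureTheory.volume) ht
      (hcR.intervalIntegrable 0 t) ((ramp_cont v_f a_max).intervalIntegrable 0 t) hc
    have hd0 : 0 < d₀ := lt_of_le_of_lt (le_max_right _ _) hd
    linarith [hmono]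
  · push_neg at hc
    obtain ⟨s, hsmem, hsv⟩ := hc
    have hper := persist v_r v_f ρ a_acc a_min a_max s t hvr hacc hmin hlt
      hsmem.1 hsmem.2 hsv.le
    have hF : ∫ s in (0:ℝ)..t, max 0 (v_f - a_max * s)
        = v_f ^ 2 / (2 * a_max) - (max 0 (v_f - a_max * t)) ^ 2 / (2 * a_max) :=
      ramp_integral v_f a_max t hamax hvf ht
    set w := max 0 (v_f - a_max * t) with hw
    have hw0 : 0 ≤ w := le_max_left _ _
    have hkey : (∫ s in (0:ℝ)..t, if s ≤ ρ then v_r + a_acc * s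
          else max 0 (v_r + ρ * a_acc - a_min * (s - ρ))) + w ^ 2 / (2 * a_max)
        ≤ v_r * ρ + a_acc * ρ ^ 2 / 2 + (v_r + ρ * a_acc) ^ 2 / (2 * a_min) := by
      rcases le_or_gt t ρ with htρ | htρ
      · have hR : (∫ s in (0:ℝ)..t, if s ≤ ρ then v_r + a_acc * s
            else max 0 (v_r + ρ * a_acc - a_min * (s - ρ))) = v_r * t + a_acc * t ^ 2 / 2 := by
          have heq : Set.EqOn (fun s : ℝ => if s ≤ ρ then v_r + a_acc * s
              else max 0 (v_r + ρ * a_acc - a_min * (s - ρ)))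
              (fun s => v_r + a_acc * s) (Set.uIcc 0 t) := by
            intro s hs
            rw [Set.uIcc_of_le ht] at hs
            simp only
            rw [if_pos (hs.2.trans htρ)]
          rw [intervalIntegral.integral_congr heq, linear_integral]
        rw [hR]
        rw [if_pos htρ] at hper
        have h1 : w ^ 2 ≤ (v_r + ρ * a_acc) ^ 2 := by
          nlinarith [mul_le_mul_of_nonneg_left htρ hacc]
        have h2 : w ^ 2 / (2 * a_max) ≤ (v_r + ρ * a_acc) ^ 2 / (2 * a_min) :=
          div_le_div₀ (by positivity) h1 (by linarith) (by linarith)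
        have h3 : v_r * t + a_acc * t ^ 2 / 2 ≤ v_r * ρ + a_acc * ρ ^ 2 / 2 := by
          nlinarith [mul_le_mul_of_nonneg_left htρ hvr]
        linarith
      · have hsplit := (intervalIntegral.integral_add_adjacent_intervals (μ := MeasureTheory.volume)
          (hcR.intervalIntegrable 0 ρ) (hcR.intervalIntegrable ρ t)).symm
        have hR1 : (∫ s in (0:ℝ)..ρ, if s ≤ ρ then v_r + a_acc * s
            else max 0 (v_r + ρ * a_acc - a_min * (s - ρ))) = v_r * ρ + a_acc * ρ ^ 2 / 2 := by
          have heq : Set.EqOn (fun s : ℝ => if s ≤ ρ then v_r + a_acc * s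
              else max 0 (v_r + ρ * a_acc - a_min * (s - ρ)))
              (fun s => v_r + a_acc * s) (Set.uIcc 0 ρ) := by
            intro s hs
            rw [Set.uIcc_of_le hρ.le] at hs
            simp only
            rw [if_pos hs.2]
          rw [intervalIntegral.integral_congr heq, linear_integral]
        have hR2 : (∫ s in ρ..t, if s ≤ ρ then v_r + a_acc * s
            else max 0 (v_r + ρ * a_acc - a_min * (s - ρ)))
            = (v_r + ρ * a_acc) ^ 2 / (2 * a_min)
              - (max 0 (v_r + ρ * a_acc - a_min * (t - ρ))) ^ 2 / (2 * a_min) := by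
          have heq : Set.EqOn (fun s : ℝ => if s ≤ ρ then v_r + a_acc * s
              else max 0 (v_r + ρ * a_acc - a_min * (s - ρ)))
              (fun s => (fun u => max 0 (v_r + ρ * a_acc - a_min * u)) (s - ρ))
              (Set.uIcc ρ t) := by
            intro s hs
            rw [Set.uIcc_of_le htρ.le] at hs
            simp only
            rcases eq_or_lt_of_le hs.1 with he | hl
            · rw [if_pos (le_of_eq he.symm), ← he, sub_self, mul_zero, sub_zero,
                max_eq_right hvρ]
              ring
            · rw [if_neg (not_le.mpr hl)]
          rw [intervalIntegral.integral_congr heq,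
            intervalIntegral.integral_comp_sub_right
              (fun u => max 0 (v_r + ρ * a_acc - a_min * u)) ρ, sub_self]
          exact ramp_integral _ a_min _ hmin hvρ (by linarith)
        rw [hsplit, hR1, hR2]
        rw [if_neg (not_le.mpr htρ)] at hper
        set z := max 0 (v_r + ρ * a_acc - a_min * (t - ρ)) with hz
        have hz0 : 0 ≤ z := le_max_left _ _
        have h1 : w ^ 2 ≤ z ^ 2 := by nlinarith
        have h2 : w ^ 2 / (2 * a_max) ≤ z ^ 2 / (2 * a_min) :=
          div_le_div₀ (by positivity) h1 (by linarith) (by linarith)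
        linarith
    have hdm : v_r * ρ + a_acc * ρ ^ 2 / 2 + (v_r + ρ * a_acc) ^ 2 / (2 * a_min)
        - v_f ^ 2 / (2 * a_max) < d₀ := lt_of_le_of_lt (le_max_left _ _) hd
    rw [hF]
    linarith
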